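/- Let T = Trias₂⁷ be the 2-dimensional real algebra with basis e₁, e₂ and products e₁⊣e₁ = e₁, e₂⊣e₁ = e₂; e₁⊢e₁ = e₁, e₁⊢e₂ = e₂; e₁⊥e₁ = e₁, e₁⊥e₂ = e₂ (all other products of basis vectors are zero). Then a linear map ψ : T → T belongs to the centroid Γ(T) if and only if ψ is a scalar multiple of the identity; in particular Γ(T) has dimension 1. -/

import Mathlib

/-- The space of derivations of an algebra with three bilinear products `l`, `r`, `m`:
linear maps satisfying the Leibniz rule for each of the three products. -/
def DerSubmodule {E : Type*} [AddCommGroup E] [Module ℝ E]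
    (l r m : E →ₗ[ℝ] E →ₗ[ℝ] E) : Submodule ℝ (E →ₗ[ℝ] E) where
  carrier := {d | ∀ x y : E,
    d (l x y) = l (d x) y + l x (d y) ∧
    d (r x y) = r (d x) y + r x (d y) ∧
    d (m x y) = m (d x) y + m x (d y)}
  add_mem' := by
    intro a b ha hb x y
    obtain ⟨h1, h2, h3⟩ := ha x y
    obtain ⟨g1, g2, g3⟩ := hb x y
    refine ⟨?_, ?_, ?_⟩ <;>
      simp only [LinearMap.add_apply, h1, h2, h3, g1, g2, g3, map_add] <;> abel
  zero_mem' := by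
    intro x y
    simp
  smul_mem' := by
    intro c a ha x y
    obtain ⟨h1, h2, h3⟩ := ha x y
    refine ⟨?_, ?_, ?_⟩ <;>
      simp only [LinearMap.smul_apply, h1, h2, h3, map_smul, smul_add]

/-- The centroid of an algebra with three bilinear products `l`, `r`, `m`:
linear maps ψ with ψ(x•y) = ψ(x)•y = x•ψ(y) for each of the three products. -/
def CentroidSubmodule {E : Type*} [AddCommGroup E] [Module ℝ E]
    (l r m : E →ₗ[ℝ] E →ₗ[ℝ] E) : Submodule ℝ (E →ₗ[ℝ] E) where
  carrier := {ψ | ∀ x y : E,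
    (ψ (l x y) = l (ψ x) y ∧ ψ (l x y) = l x (ψ y)) ∧
    (ψ (r x y) = r (ψ x) y ∧ ψ (r x y) = r x (ψ y)) ∧
    (ψ (m x y) = m (ψ x) y ∧ ψ (m x y) = m x (ψ y))}
  add_mem' := by
    intro a b ha hb x y
    obtain ⟨⟨h1, h1'⟩, ⟨h2, h2'⟩, ⟨h3, h3'⟩⟩ := ha x y
    obtain ⟨⟨g1, g1'⟩, ⟨g2, g2'⟩, ⟨g3, g3'⟩⟩ := hb x y
    refine ⟨⟨?_, ?_⟩, ⟨?_, ?_⟩, ⟨?_, ?_⟩⟩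
    · simp only [LinearMap.add_apply, map_add, h1, g1]
    · simp only [LinearMap.add_apply, map_add, h1', g1']
    · simp only [LinearMap.add_apply, map_add, h2, g2]
    · simp only [LinearMap.add_apply, map_add, h2', g2']
    · simp only [LinearMap.add_apply, map_add, h3, g3]
    · simp only [LinearMap.add_apply, map_add, h3', g3']
  zero_mem' := by
    intro x y
    simp
  smul_mem' := by
    intro c a ha x y
    obtain ⟨⟨h1, h1'⟩, ⟨h2, h2'⟩, ⟨h3, h3'⟩⟩ := ha x y
    refine ⟨⟨?_, ?_⟩, ⟨?_, ?_⟩, ⟨?_, ?_⟩⟩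
    · simp only [LinearMap.smul_apply, map_smul, h1]
    · simp only [LinearMap.smul_apply, map_smul, h1']
    · simp only [LinearMap.smul_apply, map_smul, h2]
    · simp only [LinearMap.smul_apply, map_smul, h2']
    · simp only [LinearMap.smul_apply, map_smul, h3]
    · simp only [LinearMap.smul_apply, map_smul, h3']

/-- The first basis vector of ℝ². -/
def e1 : Fin 2 → ℝ := ![1, 0]

/-- The second basis vector of ℝ². -/
def e2 : Fin 2 → ℝ := ![0, 1]

/-- The centroid of the 2-dimensional trialgebra Trias₂⁷ consists exactly of the scalar
multiples of the identity; in particular Γ(T) has dimension 1. -/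
theorem statement14 (l r m : (Fin 2 → ℝ) →ₗ[ℝ] (Fin 2 → ℝ) →ₗ[ℝ] (Fin 2 → ℝ))
    (hl11 : l e1 e1 = e1)
    (hl12 : l e1 e2 = 0)
    (hl21 : l e2 e1 = e2)
    (hl22 : l e2 e2 = 0)
    (hr11 : r e1 e1 = e1)
    (hr12 : r e1 e2 = e2)
    (hr21 : r e2 e1 = 0)
    (hr22 : r e2 e2 = 0)
    (hm11 : m e1 e1 = e1)
    (hm12 : m e1 e2 = e2)
    (hm21 : m e2 e1 = 0)
    (hm22 : m e2 e2 = 0) :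
    (∀ ψ : (Fin 2 → ℝ) →ₗ[ℝ] (Fin 2 → ℝ),
      ψ ∈ CentroidSubmodule l r m ↔ ∃ c : ℝ, ψ = c • LinearMap.id) ∧
    Module.finrank ℝ (CentroidSubmodule l r m) = 1 := by
  have decomp : ∀ x : Fin 2 → ℝ, x = x 0 • e1 + x 1 • e2 := by
    intro x; funext i; fin_cases i <;> simp [e1, e2]
  have main : ∀ ψ : (Fin 2 → ℝ) →ₗ[ℝ] (Fin 2 → ℝ),
      ψ ∈ CentroidSubmodule l r m ↔ ∃ c : ℝ, ψ = c • LinearMap.id := by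
    intro ψ
    constructor
    · intro hψ
      set a := (ψ e1) 0 with ha
      have he1 : ψ e1 = a • e1 := by
        have h := (hψ e1 e1).1.2
        rw [hl11] at h
        calc ψ e1 = l e1 (ψ e1) := h
          _ = l e1 ((ψ e1) 0 • e1 + (ψ e1) 1 • e2) := by rw [← decomp (ψ e1)]
          _ = a • e1 := by simp [hl11, hl12, ha]
      have he2 : ψ e2 = a • e2 := by
        have h := (hψ e2 e1).1.2
        rw [hl21, he1] at h
        rw [h]; simp [hl21]
      refine ⟨a, LinearMap.ext fun x => ?_⟩
      calc ψ x = ψ (x 0 • e1 + x 1 • e2) := by rw [← decomp x]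
        _ = x 0 • (a • e1) + x 1 • (a • e2) := by rw [map_add, map_smul, map_smul, he1, he2]
        _ = a • (x 0 • e1 + x 1 • e2) := by rw [smul_comm (x 0) a, smul_comm (x 1) a, smul_add]
        _ = (a • LinearMap.id) x := by rw [← decomp x]; simp
    · rintro ⟨c, rfl⟩
      intro x y
      refine ⟨⟨?_, ?_⟩, ⟨?_, ?_⟩, ⟨?_, ?_⟩⟩ <;>
        simp [map_smul]
  refine ⟨main, ?_⟩
  have hspan : CentroidSubmodule l r m = Submodule.span ℝ {(LinearMap.id : (Fin 2 → ℝ) →ₗ[ℝ] (Fin 2 → ℝ))} := by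
    ext ψ
    rw [main ψ, Submodule.mem_span_singleton]
    constructor
    · rintro ⟨c, rfl⟩; exact ⟨c, rfl⟩
    · rintro ⟨c, rfl⟩; exact ⟨c, rfl⟩
  rw [hspan]
  rw [finrank_span_singleton]
  intro h
  have := congrFun (congrArg (fun f => f e1) h) 0
  simp [e1] at this
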